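/- arXiv:1311.2415 — 2 statements merged into one kernel-verified Lean document; each statement's English description precedes it below -/
import Mathlib

section
/- For any function f : [a,b] → ℝ, c ≥ 0, and any function g : [a,b] → ℝ with ‖g − f‖_∞ ≤ c/2, the truncated variation satisfies TV^c(f,[a,b]) ≤ TV^0(g,[a,b]), i.e. the truncated variation of f at level c is bounded above by the total variation of any function within uniform distance c/2 of f. -/
open scoped ENNReal

/-- Truncated variation of `f` on `[a,b]` at level `c`, valued in `[0,∞]`. -/
noncomputable def truncVar (f : ℝ → ℝ) (a b c : ℝ) : ℝ≥0∞ :=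
  ⨆ (n : ℕ) (t : Fin (n + 1) → ℝ) (_ : StrictMono t)
    (_ : ∀ i, t i ∈ Set.Icc a b),
    ∑ i : Fin n, ENNReal.ofReal
      (max (|f (t i.succ) - f (t i.castSucc)| - c) 0)

theorem truncVar_le_totalVar (f g : ℝ → ℝ) (a b c : ℝ) (hc : 0 ≤ c)
    (hg : ∀ x ∈ Set.Icc a b, |g x - f x| ≤ c / 2) :
    truncVar f a b c ≤ truncVar g a b 0 := by
  refine iSup_le fun n => iSup_le fun t => iSup_le fun hst => iSup_le fun hmem => ?_
  refine le_trans ?_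
    (le_iSup_of_le n (le_iSup_of_le t (le_iSup_of_le hst (le_iSup_of_le hmem le_rfl))))
  refine Finset.sum_le_sum fun i _ => ENNReal.ofReal_le_ofReal ?_
  have h1 := hg _ (hmem i.succ)
  have h2 := hg _ (hmem i.castSucc)
  have key : |f (t i.succ) - f (t i.castSucc)| ≤ |g (t i.succ) - g (t i.castSucc)| + c := by
    have : f (t i.succ) - f (t i.castSucc) =
        (g (t i.succ) - g (t i.castSucc)) - ((g (t i.succ) - f (t i.succ))
          - (g (t i.castSucc) - f (t i.castSucc))) := by ring
    rw [this]
    calc _ ≤ |g (t i.succ) - g (t i.castSucc)| +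
        |(g (t i.succ) - f (t i.succ)) - (g (t i.castSucc) - f (t i.castSucc))| :=
          abs_sub _ _
      _ ≤ |g (t i.succ) - g (t i.castSucc)| + (c / 2 + c / 2) := by
          gcongr
          exact (abs_sub _ _).trans (add_le_add h1 h2)
      _ = _ := by ring
  have : max (|g (t i.succ) - g (t i.castSucc)| - 0) 0 = |g (t i.succ) - g (t i.castSucc)| := by
    simp [abs_nonneg]
  rw [this]
  exact max_le (by linarith) (abs_nonneg _)
end

section
/- Suppose f₁, f₂ : [a,b] → ℝ are continuous non-decreasing functions with f₁(a) = f₂(a) = 0 such that the Stieltjes measures df₁ and df₂ are mutually singular (carried by disjoint sets). Then the total variation of g(t) = x + f₁(t) − f₂(t) on [a,b] equals f₁(b) + f₂(b). -/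
open Set MeasureTheory

lemma evar_sub_le' (F G : ℝ → ℝ) (s : Set ℝ) :
    eVariationOn (fun t => F t - G t) s ≤ eVariationOn F s + eVariationOn G s := by
  apply iSup_le
  rintro ⟨n, u, hu, us⟩
  calc (∑ i ∈ Finset.range n,
        edist ((fun t => F t - G t) (u (i+1))) ((fun t => F t - G t) (u i)))
      ≤ ∑ i ∈ Finset.range n,
          (edist (F (u (i+1))) (F (u i)) + edist (G (u (i+1))) (G (u i))) := by
        apply Finset.sum_le_sum
        intro i _
        simp only [edist_dist, Real.dist_eq]
        rw [← ENNReal.ofReal_add (abs_nonneg _) (abs_nonneg _)]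
        apply ENNReal.ofReal_le_ofReal
        have h : F (u (i+1)) - G (u (i+1)) - (F (u i) - G (u i))
            = (F (u (i+1)) - F (u i)) - (G (u (i+1)) - G (u i)) := by ring
        rw [h]
        exact abs_sub _ _
    _ = (∑ i ∈ Finset.range n, edist (F (u (i+1))) (F (u i)))
        + ∑ i ∈ Finset.range n, edist (G (u (i+1))) (G (u i)) := Finset.sum_add_distrib
    _ ≤ eVariationOn F s + eVariationOn G s :=
        add_le_add (eVariationOn.sum_le (f := F) (n := n) hu us) (eVariationOn.sum_le (f := G) (n := n) hu us)

lemma exists_idx {t : ℕ → ℝ} (ht : Monotone t) {z : ℝ} :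
    ∀ n : ℕ, t 0 < z → z ≤ t n → ∃ i < n, z ∈ Set.Ioc (t i) (t (i+1))
  | 0, h0, hn => absurd (h0.trans_le hn) (lt_irrefl _)
  | (n+1), h0, hn => by
    by_cases h : z ≤ t n
    · obtain ⟨i, hi, hz⟩ := exists_idx ht n h0 h
      exact ⟨i, hi.trans (Nat.lt_succ_self n), hz⟩
    · exact ⟨n, Nat.lt_succ_self n, ⟨not_le.1 h, hn⟩⟩

open scoped ENNReal MeasureTheory

theorem totalVar_eq_sum_of_singular (a b x : ℝ) (hab : a ≤ b)
    (f₁ f₂ : StieltjesFunction ℝ)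
    (h₁c : Continuous f₁) (h₂c : Continuous f₂)
    (h₁a : f₁ a = 0) (h₂a : f₂ a = 0)
    (hsing : f₁.measure ⟂ₘ f₂.measure) :
    eVariationOn (fun s => x + f₁ s - f₂ s) (Set.Icc a b) =
      ENNReal.ofReal (f₁ b + f₂ b) := by
  rcases eq_or_lt_of_le hab with rfl | hab'
  · rw [Set.Icc_self, h₁a, h₂a,
      eVariationOn.subsingleton _ (Set.subsingleton_singleton)]
    norm_num
  have h₁b : 0 ≤ f₁ b := by rw [← h₁a]; exact f₁.mono hab
  have h₂b : 0 ≤ f₂ b := by rw [← h₂a]; exact f₂.mono hab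
  apply le_antisymm
  · -- upper bound
    have hF : Monotone (fun t => x + f₁ t) := fun u v huv => by
      simpa using f₁.mono huv
    have e1 : eVariationOn (fun t => x + f₁ t) (Set.Icc a b)
        ≤ ENNReal.ofReal (f₁ b - f₁ a) := by
      have := (hF.monotoneOn (Set.Icc a b)).eVariationOn_le (a := a) (b := b)
        ⟨le_rfl, hab⟩ ⟨hab, le_rfl⟩
      rw [Set.inter_self] at this
      simpa using this
    have e2 : eVariationOn (fun t => f₂ t) (Set.Icc a b)
        ≤ ENNReal.ofReal (f₂ b - f₂ a) := by
      have := ((f₂.mono).monotoneOn (Set.Icc a b)).eVariationOn_le (a := a) (b := b)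
        ⟨le_rfl, hab⟩ ⟨hab, le_rfl⟩
      rw [Set.inter_self] at this
      exact this
    calc eVariationOn (fun s => x + f₁ s - f₂ s) (Set.Icc a b)
        ≤ eVariationOn (fun t => x + f₁ t) (Set.Icc a b)
          + eVariationOn (fun t => f₂ t) (Set.Icc a b) :=
          evar_sub_le' (fun t => x + f₁ t) (fun t => f₂ t) (Set.Icc a b)
      _ ≤ ENNReal.ofReal (f₁ b - f₁ a) + ENNReal.ofReal (f₂ b - f₂ a) := add_le_add e1 e2
      _ = ENNReal.ofReal (f₁ b + f₂ b) := by
          rw [h₁a, h₂a, sub_zero, sub_zero, ← ENNReal.ofReal_add h₁b h₂b]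
  · -- lower bound
    have key : ∀ δ : ℝ, 0 < δ → ENNReal.ofReal (f₁ b + f₂ b - 4*δ) ≤
        eVariationOn (fun s => x + f₁ s - f₂ s) (Set.Icc a b) := by
      intro δ hδ
      classical
      obtain ⟨S, hSm, hS1, hS2⟩ := hsing
      set μ₁ := f₁.measure with hμ₁
      set μ₂ := f₂.measure with hμ₂
      set T := S ∩ Set.Ioc a b with hT
      have hTm : MeasurableSet T := hSm.inter measurableSet_Ioc
      have hT2 : ENNReal.ofReal (f₂ b) ≤ μ₂ T := by
        have hsub : Set.Ioc a b ⊆ T ∪ Sᶜ := by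
          intro y hy
          by_cases h : y ∈ S
          · exact Or.inl ⟨h, hy⟩
          · exact Or.inr h
        calc ENNReal.ofReal (f₂ b) = μ₂ (Set.Ioc a b) := by
              rw [hμ₂, f₂.measure_Ioc, h₂a, sub_zero]
          _ ≤ μ₂ (T ∪ Sᶜ) := measure_mono hsub
          _ ≤ μ₂ T + μ₂ Sᶜ := measure_union_le _ _
          _ = μ₂ T := by rw [hS2, add_zero]
      have hTfin : μ₂ T ≠ ⊤ := by
        have : μ₂ T ≤ μ₂ (Set.Ioc a b) := measure_mono Set.inter_subset_right
        rw [hμ₂, f₂.measure_Ioc] at this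
        exact (this.trans_lt ENNReal.ofReal_lt_top).ne
      obtain ⟨K, hKT, hKc, hKlt⟩ := hTm.exists_isCompact_lt_add hTfin
        (ε := ENNReal.ofReal δ) (by simp [ENNReal.ofReal_eq_zero, not_le, hδ])
      have hK1 : μ₁ K = 0 :=
        measure_mono_null (hKT.trans Set.inter_subset_left) hS1
      obtain ⟨U, hKU, hUo, hU1⟩ := Set.exists_isOpen_lt_of_lt K (ENNReal.ofReal δ)
        (by rw [hK1]; exact ENNReal.ofReal_pos.2 hδ)
      obtain ⟨r, hr, hrU⟩ := hKc.exists_thickening_subset_open hUo hKU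
      obtain ⟨n, hn⟩ := exists_nat_gt ((b - a) / r)
      have hn0 : 0 < (n : ℝ) := lt_of_le_of_lt (div_nonneg (by linarith) hr.le) hn
      have hnn : (n : ℝ) ≠ 0 := ne_of_gt hn0
      set h : ℝ := (b - a) / n with hh
      have hhpos : 0 < h := div_pos (by linarith) hn0
      have hhr : h < r := by
        rw [hh, div_lt_iff₀ hn0]
        calc b - a = (b - a) / r * r := by field_simp
          _ < n * r := by exact mul_lt_mul_of_pos_right hn hr
          _ = r * n := mul_comm _ _
      set t : ℕ → ℝ := fun i => a + (min i n : ℕ) * h with ht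
      have htmono : Monotone t := by
        intro i j hij
        have hc : ((min i n : ℕ) : ℝ) ≤ ((min j n : ℕ) : ℝ) :=
          Nat.cast_le.2 (min_le_min hij le_rfl)
        exact add_le_add_right (mul_le_mul_of_nonneg_right hc hhpos.le) a
      have ht0 : t 0 = a := by simp [ht]
      have htn : t n = b := by
        show a + ((min n n : ℕ) : ℝ) * h = b
        rw [min_self, hh]
        field_simp
        ring
      have htmem : ∀ i, t i ∈ Set.Icc a b := by
        intro i
        constructor
        · rw [← ht0]; exact htmono (Nat.zero_le i)
        · rw [← htn]
          rcases le_total i n with hin | hin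
          · exact htmono hin
          · simp only [ht, min_eq_right hin, min_self, le_refl]
      have hstep : ∀ i < n, t (i+1) - t i = h := by
        intro i hi
        simp only [ht, min_eq_left hi.le, min_eq_left (Nat.succ_le_of_lt hi)]
        push_cast
        ring
      set M := (Finset.range n).filter
        (fun i => (Set.Ioc (t i) (t (i+1)) ∩ K).Nonempty) with hM
      have hMrange : M ⊆ Finset.range n := Finset.filter_subset _ _
      -- marked intervals are inside U
      have hMU : ∀ i ∈ M, Set.Ioc (t i) (t (i+1)) ⊆ U := by
        intro i hi y hy
        rw [hM, Finset.mem_filter, Finset.mem_range] at hi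
        obtain ⟨hin, z, hzI, hzK⟩ := hi
        apply hrU
        rw [Metric.mem_thickening_iff]
        refine ⟨z, hzK, ?_⟩
        rw [Real.dist_eq]
        have hlen := hstep i hin
        have : |y - z| ≤ t (i+1) - t i := by
          rw [abs_le]
          constructor
          · linarith [hy.1, hzI.2]
          · linarith [hy.2, hzI.1]
        linarith
      -- K covered by marked intervals
      have hKcov : K ⊆ ⋃ i ∈ M, Set.Ioc (t i) (t (i+1)) := by
        intro z hz
        have hzIoc : z ∈ Set.Ioc a b := (hKT hz).2
        obtain ⟨i, hi, hzi⟩ := exists_idx htmono n (ht0 ▸ hzIoc.1) (htn ▸ hzIoc.2)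
        exact Set.mem_biUnion
          (Finset.mem_filter.2 ⟨Finset.mem_range.2 hi, ⟨z, hzi, hz⟩⟩) hzi
      -- disjointness
      have hdisj : (M : Set ℕ).PairwiseDisjoint (fun i => Set.Ioc (t i) (t (i+1))) := by
        intro i _ j _ hij
        rcases hij.lt_or_gt with hlt | hlt
        · rw [Function.onFun, Set.Ioc_disjoint_Ioc]
          exact le_trans (min_le_left _ _) ((htmono hlt).trans (le_max_right _ _))
        · rw [Function.onFun, Set.Ioc_disjoint_Ioc]
          exact le_trans (min_le_right _ _) ((htmono hlt).trans (le_max_left _ _))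
      set Δ₁ : ℕ → ℝ := fun i => f₁ (t (i+1)) - f₁ (t i) with hΔ₁
      set Δ₂ : ℕ → ℝ := fun i => f₂ (t (i+1)) - f₂ (t i) with hΔ₂
      have hΔ₁nn : ∀ i, 0 ≤ Δ₁ i := fun i => sub_nonneg.2 (f₁.mono (htmono (Nat.le_succ i)))
      have hΔ₂nn : ∀ i, 0 ≤ Δ₂ i := fun i => sub_nonneg.2 (f₂.mono (htmono (Nat.le_succ i)))
      -- measure of marked union
      have hμ₁M : ENNReal.ofReal (∑ i ∈ M, Δ₁ i)
          = μ₁ (⋃ i ∈ M, Set.Ioc (t i) (t (i+1))) := by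
        rw [measure_biUnion_finset hdisj (fun _ _ => measurableSet_Ioc),
          ENNReal.ofReal_sum_of_nonneg (fun i _ => hΔ₁nn i)]
        exact Finset.sum_congr rfl fun i _ => by rw [hμ₁, f₁.measure_Ioc]
      have hμ₂M : ENNReal.ofReal (∑ i ∈ M, Δ₂ i)
          = μ₂ (⋃ i ∈ M, Set.Ioc (t i) (t (i+1))) := by
        rw [measure_biUnion_finset hdisj (fun _ _ => measurableSet_Ioc),
          ENNReal.ofReal_sum_of_nonneg (fun i _ => hΔ₂nn i)]
        exact Finset.sum_congr rfl fun i _ => by rw [hμ₂, f₂.measure_Ioc]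
      have hA1 : ∑ i ∈ M, Δ₁ i ≤ δ := by
        have : ENNReal.ofReal (∑ i ∈ M, Δ₁ i) ≤ ENNReal.ofReal δ := by
          rw [hμ₁M]
          exact le_of_lt (lt_of_le_of_lt
            (measure_mono (Set.iUnion₂_subset hMU)) hU1)
        exact (ENNReal.ofReal_le_ofReal_iff hδ.le).1 this
      have hA2 : f₂ b ≤ (∑ i ∈ M, Δ₂ i) + δ := by
        have h1 : ENNReal.ofReal (f₂ b) ≤ ENNReal.ofReal ((∑ i ∈ M, Δ₂ i) + δ) := by
          calc ENNReal.ofReal (f₂ b) ≤ μ₂ T := hT2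
            _ ≤ μ₂ K + ENNReal.ofReal δ := hKlt.le
            _ ≤ μ₂ (⋃ i ∈ M, Set.Ioc (t i) (t (i+1))) + ENNReal.ofReal δ :=
                add_le_add_left (measure_mono hKcov) _
            _ = ENNReal.ofReal (∑ i ∈ M, Δ₂ i) + ENNReal.ofReal δ := by rw [hμ₂M]
            _ = ENNReal.ofReal ((∑ i ∈ M, Δ₂ i) + δ) := by
                rw [ENNReal.ofReal_add (Finset.sum_nonneg fun i _ => hΔ₂nn i) hδ.le]
        exact (ENNReal.ofReal_le_ofReal_iff
          (add_nonneg (Finset.sum_nonneg fun i _ => hΔ₂nn i) hδ.le)).1 h1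
      -- telescoping
      have htel₁ : ∑ i ∈ Finset.range n, Δ₁ i = f₁ b := by
        rw [hΔ₁]
        rw [Finset.sum_range_sub (fun i => f₁ (t i)) n]
        rw [ht0, htn, h₁a, sub_zero]
      have htel₂ : ∑ i ∈ Finset.range n, Δ₂ i = f₂ b := by
        rw [hΔ₂]
        rw [Finset.sum_range_sub (fun i => f₂ (t i)) n]
        rw [ht0, htn, h₂a, sub_zero]
      have hsplit₁ : ∑ i ∈ Finset.range n \ M, Δ₁ i + ∑ i ∈ M, Δ₁ i = f₁ b := by
        rw [Finset.sum_sdiff hMrange, htel₁]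
      have hsplit₂ : ∑ i ∈ Finset.range n \ M, Δ₂ i + ∑ i ∈ M, Δ₂ i = f₂ b := by
        rw [Finset.sum_sdiff hMrange, htel₂]
      -- main real inequality
      have main : f₁ b + f₂ b - 4*δ ≤ ∑ i ∈ Finset.range n, |Δ₁ i - Δ₂ i| := by
        have e1 : ∑ i ∈ M, (Δ₂ i - Δ₁ i) ≤ ∑ i ∈ M, |Δ₁ i - Δ₂ i| :=
          Finset.sum_le_sum fun i _ => by
            rw [← neg_sub (Δ₁ i) (Δ₂ i)]; exact neg_le_abs _
        have e2 : ∑ i ∈ Finset.range n \ M, (Δ₁ i - Δ₂ i)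
            ≤ ∑ i ∈ Finset.range n \ M, |Δ₁ i - Δ₂ i| :=
          Finset.sum_le_sum fun i _ => le_abs_self _
        have esplit : ∑ i ∈ Finset.range n \ M, |Δ₁ i - Δ₂ i| + ∑ i ∈ M, |Δ₁ i - Δ₂ i|
            = ∑ i ∈ Finset.range n, |Δ₁ i - Δ₂ i| := Finset.sum_sdiff hMrange
        rw [Finset.sum_sub_distrib] at e1 e2
        linarith [hA1, hA2, hsplit₁, hsplit₂]
      calc ENNReal.ofReal (f₁ b + f₂ b - 4*δ)
          ≤ ENNReal.ofReal (∑ i ∈ Finset.range n, |Δ₁ i - Δ₂ i|) :=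
            ENNReal.ofReal_le_ofReal main
        _ = ∑ i ∈ Finset.range n, ENNReal.ofReal |Δ₁ i - Δ₂ i| :=
            ENNReal.ofReal_sum_of_nonneg fun i _ => abs_nonneg _
        _ = ∑ i ∈ Finset.range n,
              edist ((fun s => x + f₁ s - f₂ s) (t (i+1))) ((fun s => x + f₁ s - f₂ s) (t i)) := by
            refine Finset.sum_congr rfl fun i _ => ?_
            rw [edist_dist, Real.dist_eq]
            congr 1
            simp only [hΔ₁, hΔ₂]
            ring
        _ ≤ eVariationOn (fun s => x + f₁ s - f₂ s) (Set.Icc a b) :=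
            eVariationOn.sum_le (n := n) htmono htmem
    -- conclude
    apply ENNReal.le_of_forall_pos_le_add
    intro ε hε _
    have hkey := key (ε / 4) (by positivity)
    calc ENNReal.ofReal (f₁ b + f₂ b)
        = ENNReal.ofReal ((f₁ b + f₂ b - 4*(ε/4)) + ε) := by congr 1; ring
      _ ≤ ENNReal.ofReal (f₁ b + f₂ b - 4*(ε/4)) + ENNReal.ofReal ε :=
          ENNReal.ofReal_add_le
      _ ≤ eVariationOn (fun s => x + f₁ s - f₂ s) (Set.Icc a b) + ε := by
          rw [ENNReal.ofReal_coe_nnreal]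
          exact add_le_add_left hkey _
end
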